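/- Let m > 1, K = 2m(m+1)/(3m+1)², λ₁ = (−1 − √(1−4K))/2, λ = √(1−4K) (so that λ = (m−1)/(3m+1)), k = (m−1)/(2m(m+1)), C > 0 and x₀ ∈ ℝ. Define u(x,t) = λ^{−2/(m+1)} · t^{−1/(m+1)} · e^{λ₁ x/m} · ( C − k·( (e^{λx} − e^{λx₀}) / (t^{1/(m+1)} λ^{2/(m+1)}) )² )^{1/(m−1)}. Then at every point (x,t) with t > 0 and C − k·( (e^{λx} − e^{λx₀}) / (t^{1/(m+1)} λ^{2/(m+1)}) )² > 0, the function u satisfies u_t = (u^m)_{xx} + (u^m)_x + K·u^m. -/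

import Mathlib

open Real Set

set_option maxHeartbeats 2000000 in
/-- the explicit function obtained from the translated Barenblatt
solution,
`u(x,t) = λ^{-2/(m+1)} t^{-1/(m+1)} e^{λ₁x/m} (C - k((e^{λx}-e^{λx₀})/(t^{1/(m+1)} λ^{2/(m+1)}))²)^{1/(m-1)}`,
satisfies `u_t = (u^m)_{xx} + (u^m)_x + K u^m` (with `K = 2m(m+1)/(3m+1)²`)
at every point where `t > 0` and the parenthesis is positive. -/
theorem stmt11
    (m : ℝ) (hm : 1 < m)
    (K : ℝ) (hK : K = 2*m*(m+1)/(3*m+1)^2)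
    (l₁ l : ℝ)
    (hl₁ : l₁ = (-1 - Real.sqrt (1 - 4*K))/2)
    (hl : l = Real.sqrt (1 - 4*K))
    (hlval : l = (m-1)/(3*m+1))
    (k : ℝ) (hk : k = (m-1)/(2*m*(m+1)))
    (C x₀ : ℝ) (hC : 0 < C)
    (u : ℝ → ℝ → ℝ)
    (hu : ∀ x t : ℝ, u x t =
      l ^ (-2/(m+1)) * t ^ (-1/(m+1)) * Real.exp (l₁*x/m) *
        (C - k * ((Real.exp (l*x) - Real.exp (l*x₀)) /
          (t ^ (1/(m+1)) * l ^ (2/(m+1))))^2) ^ (1/(m-1))) :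
    ∀ x t : ℝ, 0 < t →
      0 < C - k * ((Real.exp (l*x) - Real.exp (l*x₀)) /
        (t ^ (1/(m+1)) * l ^ (2/(m+1))))^2 →
      deriv (fun s => u x s) t =
        deriv (deriv (fun z => u z t ^ m)) x
          + deriv (fun z => u z t ^ m) x + K * u x t ^ m := by
  intro x t ht hg
  have hm1 : (0:ℝ) < m - 1 := by linarith
  have hmp : (0:ℝ) < m + 1 := by linarith
  have hmpos : (0:ℝ) < m := by linarith
  have h3m : (0:ℝ) < 3*m+1 := by linarith
  have hlpos : 0 < l := by rw [hlval]; positivity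
  have hl1 : l₁ = (-1 - l)/2 := by rw [hl₁, hl]
  have hl1v : l₁ = -(2*m)/(3*m+1) := by
    rw [hl1, hlval]; field_simp; try ring
  have hkpos : 0 < k := by rw [hk]; positivity
  have hs : 0 < t ^ (1/(m+1)) := Real.rpow_pos_of_pos ht _
  have hd : 0 < l ^ (2/(m+1)) := Real.rpow_pos_of_pos hlpos _
  have hsd : t ^ (1/(m+1)) * l ^ (2/(m+1)) ≠ 0 := (mul_pos hs hd).ne'
  have hexp : ∀ (a z : ℝ), HasDerivAt (fun y : ℝ => Real.exp (a*y)) (Real.exp (a*z) * a) z := by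
    intro a z
    have h : HasDerivAt (fun y : ℝ => a*y) a z := by simpa using (hasDerivAt_id z).const_mul a
    exact h.exp
  ------------------------------------------------------------------
  -- time derivative
  have hfun_t : (fun s => u x s) = (fun s : ℝ => l ^ (-2/(m+1)) * s ^ (-1/(m+1)) * Real.exp (l₁*x/m) *
      (C - k * ((Real.exp (l*x) - Real.exp (l*x₀)) / (s ^ (1/(m+1)) * l ^ (2/(m+1))))^2) ^ (1/(m-1))) :=
    funext fun s => hu x s
  have hb : HasDerivAt (fun s : ℝ => s ^ (1/(m+1))) (1/(m+1) * t ^ (1/(m+1) - 1)) t :=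
    Real.hasDerivAt_rpow_const (Or.inl ht.ne')
  have ha : HasDerivAt (fun s : ℝ => s ^ (-1/(m+1))) (-1/(m+1) * t ^ (-1/(m+1) - 1)) t :=
    Real.hasDerivAt_rpow_const (Or.inl ht.ne')
  have hGt : HasDerivAt (fun s : ℝ => C - k * ((Real.exp (l*x) - Real.exp (l*x₀)) /
      (s ^ (1/(m+1)) * l ^ (2/(m+1))))^2) _ t :=
    ((((hasDerivAt_const t (Real.exp (l*x) - Real.exp (l*x₀))).div
      (hb.mul_const (l ^ (2/(m+1)))) hsd).pow 2).const_mul k).const_sub C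
  have houter_t : HasDerivAt (fun s : ℝ => (C - k * ((Real.exp (l*x) - Real.exp (l*x₀)) /
      (s ^ (1/(m+1)) * l ^ (2/(m+1))))^2) ^ (1/(m-1))) _ t :=
    hGt.rpow_const (Or.inl hg.ne')
  have hT : HasDerivAt (fun s : ℝ => l ^ (-2/(m+1)) * s ^ (-1/(m+1)) * Real.exp (l₁*x/m) *
      (C - k * ((Real.exp (l*x) - Real.exp (l*x₀)) / (s ^ (1/(m+1)) * l ^ (2/(m+1))))^2) ^ (1/(m-1))) _ t :=
    ((ha.const_mul (l ^ (-2/(m+1)))).mul_const (Real.exp (l₁*x/m))).mul houter_t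
  ------------------------------------------------------------------
  -- space: the open set where the parenthesis is positive
  have hcont : Continuous (fun z : ℝ => C - k * ((Real.exp (l*z) - Real.exp (l*x₀)) /
      (t ^ (1/(m+1)) * l ^ (2/(m+1))))^2) := by fun_prop
  have hopen : IsOpen {z : ℝ | 0 < C - k * ((Real.exp (l*z) - Real.exp (l*x₀)) /
      (t ^ (1/(m+1)) * l ^ (2/(m+1))))^2} := isOpen_lt continuous_const hcont
  have hxS : x ∈ {z : ℝ | 0 < C - k * ((Real.exp (l*z) - Real.exp (l*x₀)) /
      (t ^ (1/(m+1)) * l ^ (2/(m+1))))^2} := hg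
  -- derivative of the inner function of z
  have hGz : ∀ z : ℝ, HasDerivAt (fun y : ℝ => C - k * ((Real.exp (l*y) - Real.exp (l*x₀)) /
      (t ^ (1/(m+1)) * l ^ (2/(m+1))))^2)
      (-(2*k*l) * (Real.exp (l*z) * (Real.exp (l*z) - Real.exp (l*x₀))) /
        (t ^ (1/(m+1)) * l ^ (2/(m+1)))^2) z := by
    intro z
    have h := (((((hexp l z).sub_const (Real.exp (l*x₀))).div_const
      (t ^ (1/(m+1)) * l ^ (2/(m+1)))).pow 2).const_mul k).const_sub C
    refine h.congr_deriv ?_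
    push_cast
    field_simp
  -- rewriting u z t ^ m on the positivity set
  have hUeq : ∀ z : ℝ, 0 < C - k * ((Real.exp (l*z) - Real.exp (l*x₀)) /
      (t ^ (1/(m+1)) * l ^ (2/(m+1))))^2 →
      u z t ^ m = (l ^ (-2/(m+1)) * t ^ (-1/(m+1))) ^ m * Real.exp (l₁*z) *
        (C - k * ((Real.exp (l*z) - Real.exp (l*x₀)) /
          (t ^ (1/(m+1)) * l ^ (2/(m+1))))^2) ^ (1/(m-1)*m) := by
    intro z hz
    have h1 : (0:ℝ) ≤ l ^ (-2/(m+1)) * t ^ (-1/(m+1)) :=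
      (mul_pos (Real.rpow_pos_of_pos hlpos _) (Real.rpow_pos_of_pos ht _)).le
    have h2 : (0:ℝ) ≤ Real.exp (l₁*z/m) := (Real.exp_pos _).le
    have h3 : (0:ℝ) ≤ (C - k * ((Real.exp (l*z) - Real.exp (l*x₀)) /
        (t ^ (1/(m+1)) * l ^ (2/(m+1))))^2) ^ (1/(m-1)) := Real.rpow_nonneg hz.le _
    rw [hu z t, Real.mul_rpow (mul_nonneg h1 h2) h3, Real.mul_rpow h1 h2,
      ← Real.exp_mul, ← Real.rpow_mul hz.le,
      show l₁*z/m*m = l₁*z by field_simp]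
  -- first space derivative
  have hU'2 : ∀ z : ℝ, 0 < C - k * ((Real.exp (l*z) - Real.exp (l*x₀)) /
      (t ^ (1/(m+1)) * l ^ (2/(m+1))))^2 →
      HasDerivAt (fun y => u y t ^ m)
      ((l ^ (-2/(m+1)) * t ^ (-1/(m+1))) ^ m * (Real.exp (l₁*z) * l₁) *
        (C - k * ((Real.exp (l*z) - Real.exp (l*x₀)) /
          (t ^ (1/(m+1)) * l ^ (2/(m+1))))^2) ^ (1/(m-1)*m)
      + (l ^ (-2/(m+1)) * t ^ (-1/(m+1))) ^ m * Real.exp (l₁*z) *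
        (-(2*k*l) * (Real.exp (l*z) * (Real.exp (l*z) - Real.exp (l*x₀))) /
            (t ^ (1/(m+1)) * l ^ (2/(m+1)))^2 * (1/(m-1)*m) *
          (C - k * ((Real.exp (l*z) - Real.exp (l*x₀)) /
            (t ^ (1/(m+1)) * l ^ (2/(m+1))))^2) ^ (1/(m-1)*m - 1))) z := by
    intro z hz
    have hbase : HasDerivAt (fun y : ℝ => (l ^ (-2/(m+1)) * t ^ (-1/(m+1))) ^ m * Real.exp (l₁*y) *
        (C - k * ((Real.exp (l*y) - Real.exp (l*x₀)) /
          (t ^ (1/(m+1)) * l ^ (2/(m+1))))^2) ^ (1/(m-1)*m)) _ z :=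
      ((hexp l₁ z).const_mul ((l ^ (-2/(m+1)) * t ^ (-1/(m+1))) ^ m)).mul
        ((hGz z).rpow_const (Or.inl hz.ne'))
    exact hbase.congr_of_eventuallyEq
      (Filter.eventuallyEq_of_mem (hopen.mem_nhds hz) (fun y hy => hUeq y hy))
  -- eventual equality of first derivative with the explicit formula
  have hev : (deriv fun z => u z t ^ m) =ᶠ[nhds x]
      (fun z : ℝ => (l ^ (-2/(m+1)) * t ^ (-1/(m+1))) ^ m * (Real.exp (l₁*z) * l₁) *
        (C - k * ((Real.exp (l*z) - Real.exp (l*x₀)) /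
          (t ^ (1/(m+1)) * l ^ (2/(m+1))))^2) ^ (1/(m-1)*m)
      + (l ^ (-2/(m+1)) * t ^ (-1/(m+1))) ^ m * Real.exp (l₁*z) *
        (-(2*k*l) * (Real.exp (l*z) * (Real.exp (l*z) - Real.exp (l*x₀))) /
            (t ^ (1/(m+1)) * l ^ (2/(m+1)))^2 * (1/(m-1)*m) *
          (C - k * ((Real.exp (l*z) - Real.exp (l*x₀)) /
            (t ^ (1/(m+1)) * l ^ (2/(m+1))))^2) ^ (1/(m-1)*m - 1))) :=
    Filter.eventuallyEq_of_mem (hopen.mem_nhds hxS) (fun z hz => (hU'2 z hz).deriv)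
  -- second space derivative
  have hGD : HasDerivAt (fun z : ℝ => -(2*k*l) * (Real.exp (l*z) * (Real.exp (l*z) - Real.exp (l*x₀))) /
      (t ^ (1/(m+1)) * l ^ (2/(m+1)))^2) _ x :=
    (((hexp l x).mul ((hexp l x).sub_const (Real.exp (l*x₀)))).const_mul (-(2*k*l))).div_const
      ((t ^ (1/(m+1)) * l ^ (2/(m+1)))^2)
  have hsec : HasDerivAt (fun z : ℝ => (l ^ (-2/(m+1)) * t ^ (-1/(m+1))) ^ m * (Real.exp (l₁*z) * l₁) *
        (C - k * ((Real.exp (l*z) - Real.exp (l*x₀)) /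
          (t ^ (1/(m+1)) * l ^ (2/(m+1))))^2) ^ (1/(m-1)*m)
      + (l ^ (-2/(m+1)) * t ^ (-1/(m+1))) ^ m * Real.exp (l₁*z) *
        (-(2*k*l) * (Real.exp (l*z) * (Real.exp (l*z) - Real.exp (l*x₀))) /
            (t ^ (1/(m+1)) * l ^ (2/(m+1)))^2 * (1/(m-1)*m) *
          (C - k * ((Real.exp (l*z) - Real.exp (l*x₀)) /
            (t ^ (1/(m+1)) * l ^ (2/(m+1))))^2) ^ (1/(m-1)*m - 1))) _ x :=
    ((((hexp l₁ x).mul_const l₁).const_mul ((l ^ (-2/(m+1)) * t ^ (-1/(m+1))) ^ m)).mul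
        ((hGz x).rpow_const (Or.inl hg.ne'))).add
      (((hexp l₁ x).const_mul ((l ^ (-2/(m+1)) * t ^ (-1/(m+1))) ^ m)).mul
        ((hGD.mul_const (1/(m-1)*m)).mul ((hGz x).rpow_const (Or.inl hg.ne'))))
  ------------------------------------------------------------------
  -- assemble the goal
  rw [hfun_t, hT.deriv, hev.deriv_eq, hsec.deriv, (hU'2 x hg).deriv, hUeq x hg]
  -- canonicalize the rpow atoms
  have hl2 : l ^ ((2:ℝ)) = l * l := by
    rw [show (2:ℝ) = ((2:ℕ):ℝ) by norm_num, Real.rpow_natCast]; ring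
  have E1 : t ^ (-1/(m+1)) = (t ^ (1/(m+1)))⁻¹ := by
    rw [show -1/(m+1) = -(1/(m+1)) by ring, Real.rpow_neg ht.le]
  have E2 : t ^ (-1/(m+1) - 1) = (t ^ (1/(m+1)))⁻¹ * t⁻¹ := by
    rw [show -1/(m+1) - 1 = -(1/(m+1)) + -1 by ring, Real.rpow_add ht,
      Real.rpow_neg ht.le, Real.rpow_neg_one]
  have E3 : t ^ (1/(m+1) - 1) = t ^ (1/(m+1)) * t⁻¹ := by
    rw [show 1/(m+1) - 1 = 1/(m+1) + -1 by ring, Real.rpow_add ht, Real.rpow_neg_one]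
  have E4 : l ^ (-2/(m+1)) = (l ^ (2/(m+1)))⁻¹ := by
    rw [show -2/(m+1) = -(2/(m+1)) by ring, Real.rpow_neg hlpos.le]
  have E5 : ((l ^ (2/(m+1)))⁻¹ * (t ^ (1/(m+1)))⁻¹) ^ m
      = l ^ (2/(m+1)) * t ^ (1/(m+1)) / (l * l * t) := by
    rw [← mul_inv, Real.inv_rpow (mul_pos hd hs).le,
      Real.mul_rpow hd.le hs.le, ← Real.rpow_mul hlpos.le, ← Real.rpow_mul ht.le,
      show 2/(m+1)*m = 2 - 2/(m+1) by field_simp; try ring,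
      show 1/(m+1)*m = 1 - 1/(m+1) by field_simp; try ring,
      Real.rpow_sub hlpos, Real.rpow_sub ht, Real.rpow_one, hl2]
    field_simp
  have hgad : ∀ a b : ℝ, a = b + 1 →
      (C - k * ((Real.exp (l*x) - Real.exp (l*x₀)) /
        (t ^ (1/(m+1)) * l ^ (2/(m+1))))^2) ^ a
      = (C - k * ((Real.exp (l*x) - Real.exp (l*x₀)) /
        (t ^ (1/(m+1)) * l ^ (2/(m+1))))^2) *
        (C - k * ((Real.exp (l*x) - Real.exp (l*x₀)) /
          (t ^ (1/(m+1)) * l ^ (2/(m+1))))^2) ^ b := by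
    intro a b hab
    rw [hab, Real.rpow_add hg, Real.rpow_one, mul_comm]
  have E6 := hgad (1/(m-1)) (1/(m-1)-1) (by ring)
  have E7 := hgad (1/(m-1)*m) (1/(m-1)) (by field_simp; try ring)
  have E8 := hgad (1/(m-1)*m - 1) (1/(m-1)-1) (by field_simp; try ring)
  have E9 : (C - k * ((Real.exp (l*x) - Real.exp (l*x₀)) /
      (t ^ (1/(m+1)) * l ^ (2/(m+1))))^2) ^ (1/(m-1)*m - 1 - 1)
      = (C - k * ((Real.exp (l*x) - Real.exp (l*x₀)) /
        (t ^ (1/(m+1)) * l ^ (2/(m+1))))^2) ^ (1/(m-1) - 1) := by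
    rw [show 1/(m-1)*m - 1 - 1 = 1/(m-1) - 1 by field_simp; try ring]
  have E10 : Real.exp (l₁*x/m) = Real.exp (l₁*x) * Real.exp (l*x)^2 := by
    rw [sq, ← Real.exp_add, ← Real.exp_add]
    congr 1
    rw [hl1v, hlval]
    field_simp
    try ring
  simp only [E1, E2, E3, E4, E5, E6, E7, E8, E9, E10, Pi.div_apply]
  set Tv := t ^ (1/(m+1)) with hTv
  set Dv := l ^ (2/(m+1)) with hDv
  set W := Real.exp (l*x) with hW
  set Bb := Real.exp (l*x₀) with hBb
  set e1 := Real.exp (l₁*x) with he1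
  set P := (C - k * ((W - Bb) / (Tv * Dv))^2) ^ (1/(m-1) - 1) with hP
  rw [hK, hk, hl1v, hlval]
  push_cast
  field_simp [hs.ne', hd.ne', ht.ne', hm1.ne', hmp.ne', hmpos.ne', h3m.ne']
  ring
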